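/- Let r' : {(x,y) : x > 0} × ℝ → ℝ³ be defined by r'(x,y) = ( (1/√3)(e^y/sinh(√3 x))(sinh²(√3 x) + 3y), −(1/√3) e^{−2y} coth(√3 x), −(1/√3) e^y / sinh(√3 x) ). Then for all x > 0, y ∈ ℝ: det[∂ₓr', ∂ᵧr', ∂ₓᵧr'] = 0, det[∂ₓr', ∂ᵧr', ∂ₓₓr'] = det[∂ₓr', ∂ᵧr', ∂ᵧᵧr'], and |det[∂ₓr', ∂ᵧr', ∂ₓₓr']| = (3/sinh²(√3 x) + 2)². In particular (x,y) are isothermal coordinates for the affine metric, which equals (3 csch²(√3 x) + 2)(dx² + dy²). -/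

import Mathlib

open Real
private lemma sq3_ne : Real.sqrt 3 ≠ 0 := by positivity
private lemma sinh_ne {x : ℝ} (hx : x ≠ 0) : Real.sinh (Real.sqrt 3 * x) ≠ 0 := by
  simp [Real.sinh_eq_zero, hx, sq3_ne]
private lemma hasDerivAt_u (x : ℝ) :
    HasDerivAt (fun s => Real.sinh (Real.sqrt 3 * s)) (Real.sqrt 3 * Real.cosh (Real.sqrt 3 * x)) x := by
  simpa [Function.comp_def, mul_comm] using
    (Real.hasDerivAt_sinh (Real.sqrt 3 * x)).comp x ((hasDerivAt_id x).const_mul (Real.sqrt 3))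
private lemma hasDerivAt_c (x : ℝ) :
    HasDerivAt (fun s => Real.cosh (Real.sqrt 3 * s)) (Real.sqrt 3 * Real.sinh (Real.sqrt 3 * x)) x := by
  simpa [Function.comp_def, mul_comm] using
    (Real.hasDerivAt_cosh (Real.sqrt 3 * x)).comp x ((hasDerivAt_id x).const_mul (Real.sqrt 3))

/- ∂ₓ of the three components of r' -/
private lemma hdx0 {x : ℝ} (hx : x ≠ 0) (y : ℝ) :
    HasDerivAt (fun s => 1 / Real.sqrt 3 * (Real.exp y / Real.sinh (Real.sqrt 3 * s)) *
        ((Real.sinh (Real.sqrt 3 * s)) ^ 2 + 3 * y))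
      (Real.exp y * Real.cosh (Real.sqrt 3 * x) *
        (1 - 3 * y / (Real.sinh (Real.sqrt 3 * x)) ^ 2)) x := by
  have hun := sinh_ne hx
  have h := (((hasDerivAt_const x (Real.exp y)).div (hasDerivAt_u x) hun).const_mul
      (1 / Real.sqrt 3)).mul (((hasDerivAt_u x).pow 2).add_const (3 * y))
  refine h.congr_deriv (Eq.symm ?_)
  simp only [Pi.pow_apply, Pi.div_apply, id_eq]
  field_simp
  ring
private lemma hdx1 {x : ℝ} (hx : x ≠ 0) (y : ℝ) :
    HasDerivAt (fun s => -(1 / Real.sqrt 3) * Real.exp (-2 * y) *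
        (Real.cosh (Real.sqrt 3 * s) / Real.sinh (Real.sqrt 3 * s)))
      (Real.exp (-2 * y) / (Real.sinh (Real.sqrt 3 * x)) ^ 2) x := by
  have hun := sinh_ne hx
  have h := ((hasDerivAt_c x).div (hasDerivAt_u x) hun).const_mul
      (-(1 / Real.sqrt 3) * Real.exp (-2 * y))
  refine h.congr_deriv (Eq.symm ?_)
  have hcs := Real.cosh_sq_sub_sinh_sq (Real.sqrt 3 * x)
  simp only [neg_mul] at *
  field_simp
  linear_combination (-1) * hcs
private lemma hdx2 {x : ℝ} (hx : x ≠ 0) (y : ℝ) :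
    HasDerivAt (fun s => -(1 / Real.sqrt 3) * Real.exp y / Real.sinh (Real.sqrt 3 * s))
      (Real.exp y * Real.cosh (Real.sqrt 3 * x) / (Real.sinh (Real.sqrt 3 * x)) ^ 2) x := by
  have hun := sinh_ne hx
  have h := (hasDerivAt_const x (-(1 / Real.sqrt 3) * Real.exp y)).div (hasDerivAt_u x) hun
  refine h.congr_deriv (Eq.symm ?_)
  field_simp
  ring

/- ∂ₓ of the three components of rx' (closed forms) -/
private lemma hdxx0 {x : ℝ} (hx : x ≠ 0) (y : ℝ) :
    HasDerivAt (fun s => Real.exp y * Real.cosh (Real.sqrt 3 * s) *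
        (1 - 3 * y / (Real.sinh (Real.sqrt 3 * s)) ^ 2))
      (Real.sqrt 3 * Real.exp y * (Real.sinh (Real.sqrt 3 * x) - 3 * y / Real.sinh (Real.sqrt 3 * x)
        + 6 * y * (Real.cosh (Real.sqrt 3 * x)) ^ 2 / (Real.sinh (Real.sqrt 3 * x)) ^ 3)) x := by
  have hun := sinh_ne hx
  have h := ((hasDerivAt_c x).const_mul (Real.exp y)).mul
      (((hasDerivAt_const x (3 * y)).div ((hasDerivAt_u x).pow 2)
        (pow_ne_zero 2 hun)).const_sub 1)
  refine h.congr_deriv (Eq.symm ?_)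
  simp only [Pi.pow_apply, Pi.div_apply, id_eq]
  field_simp
  ring
private lemma hdxx1 {x : ℝ} (hx : x ≠ 0) (y : ℝ) :
    HasDerivAt (fun s => Real.exp (-2 * y) / (Real.sinh (Real.sqrt 3 * s)) ^ 2)
      (-2 * Real.sqrt 3 * Real.exp (-2 * y) * Real.cosh (Real.sqrt 3 * x) /
        (Real.sinh (Real.sqrt 3 * x)) ^ 3) x := by
  have hun := sinh_ne hx
  have h := (hasDerivAt_const x (Real.exp (-2 * y))).div ((hasDerivAt_u x).pow 2)
      (pow_ne_zero 2 hun)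
  refine h.congr_deriv (Eq.symm ?_)
  simp only [Pi.pow_apply, Pi.div_apply, id_eq]
  field_simp
  ring
private lemma hdxx2 {x : ℝ} (hx : x ≠ 0) (y : ℝ) :
    HasDerivAt (fun s => Real.exp y * Real.cosh (Real.sqrt 3 * s) / (Real.sinh (Real.sqrt 3 * s)) ^ 2)
      (Real.sqrt 3 * Real.exp y * ((Real.sinh (Real.sqrt 3 * x)) ^ 2 -
        2 * (Real.cosh (Real.sqrt 3 * x)) ^ 2) / (Real.sinh (Real.sqrt 3 * x)) ^ 3) x := by
  have hun := sinh_ne hx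
  have h := ((hasDerivAt_c x).const_mul (Real.exp y)).div ((hasDerivAt_u x).pow 2)
      (pow_ne_zero 2 hun)
  refine h.congr_deriv (Eq.symm ?_)
  simp only [Pi.pow_apply, Pi.div_apply, id_eq]
  field_simp
  ring

/- ∂ᵧ of the three components of r' -/
private lemma hdy0 {x : ℝ} (hx : x ≠ 0) (y : ℝ) :
    HasDerivAt (fun t => 1 / Real.sqrt 3 * (Real.exp t / Real.sinh (Real.sqrt 3 * x)) *
        ((Real.sinh (Real.sqrt 3 * x)) ^ 2 + 3 * t))
      (1 / Real.sqrt 3 * Real.exp y * ((Real.sinh (Real.sqrt 3 * x)) ^ 2 + 3 * y + 3) /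
        Real.sinh (Real.sqrt 3 * x)) y := by
  have hun := sinh_ne hx
  have h := ((((hasDerivAt_id y).exp).div_const (Real.sinh (Real.sqrt 3 * x))).const_mul
      (1 / Real.sqrt 3)).mul (((hasDerivAt_id y).const_mul 3).const_add
        ((Real.sinh (Real.sqrt 3 * x)) ^ 2))
  refine h.congr_deriv (Eq.symm ?_)
  simp only [Pi.pow_apply, Pi.div_apply, id_eq]
  field_simp
private lemma hdy1 (x y : ℝ) :
    HasDerivAt (fun t => -(1 / Real.sqrt 3) * Real.exp (-2 * t) *
        (Real.cosh (Real.sqrt 3 * x) / Real.sinh (Real.sqrt 3 * x)))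
      (2 / Real.sqrt 3 * Real.exp (-2 * y) * Real.cosh (Real.sqrt 3 * x) /
        Real.sinh (Real.sqrt 3 * x)) y := by
  have h := ((((hasDerivAt_id y).const_mul (-2)).exp).const_mul (-(1 / Real.sqrt 3))).mul_const
      (Real.cosh (Real.sqrt 3 * x) / Real.sinh (Real.sqrt 3 * x))
  refine h.congr_deriv (Eq.symm ?_)
  simp only [Pi.pow_apply, Pi.div_apply, id_eq]
  field_simp
private lemma hdy2 (x y : ℝ) :
    HasDerivAt (fun t => -(1 / Real.sqrt 3) * Real.exp t / Real.sinh (Real.sqrt 3 * x))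
      (-(1 / Real.sqrt 3) * Real.exp y / Real.sinh (Real.sqrt 3 * x)) y := by
  have h := (((hasDerivAt_id y).exp).const_mul (-(1 / Real.sqrt 3))).div_const
      (Real.sinh (Real.sqrt 3 * x))
  simp only [id_eq, mul_one] at h
  exact h

/- ∂ᵧ of the three components of rx' -/
private lemma hdxy0 (x y : ℝ) :
    HasDerivAt (fun t => Real.exp t * Real.cosh (Real.sqrt 3 * x) *
        (1 - 3 * t / (Real.sinh (Real.sqrt 3 * x)) ^ 2))
      (Real.exp y * Real.cosh (Real.sqrt 3 * x) *
        (1 - (3 * y + 3) / (Real.sinh (Real.sqrt 3 * x)) ^ 2)) y := by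
  have h := (((hasDerivAt_id y).exp).mul_const (Real.cosh (Real.sqrt 3 * x))).mul
      ((((hasDerivAt_id y).const_mul 3).div_const ((Real.sinh (Real.sqrt 3 * x)) ^ 2)).const_sub 1)
  simp only [id_eq, mul_one] at h
  refine h.congr_deriv (Eq.symm ?_)
  ring
private lemma hdxy1 (x y : ℝ) :
    HasDerivAt (fun t => Real.exp (-2 * t) / (Real.sinh (Real.sqrt 3 * x)) ^ 2)
      (-2 * Real.exp (-2 * y) / (Real.sinh (Real.sqrt 3 * x)) ^ 2) y := by
  have h := (((hasDerivAt_id y).const_mul (-2)).exp).div_const ((Real.sinh (Real.sqrt 3 * x)) ^ 2)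
  simp only [id_eq, mul_one] at h
  refine h.congr_deriv (Eq.symm ?_)
  ring
private lemma hdxy2 (x y : ℝ) :
    HasDerivAt (fun t => Real.exp t * Real.cosh (Real.sqrt 3 * x) / (Real.sinh (Real.sqrt 3 * x)) ^ 2)
      (Real.exp y * Real.cosh (Real.sqrt 3 * x) / (Real.sinh (Real.sqrt 3 * x)) ^ 2) y := by
  have h := (((hasDerivAt_id y).exp).mul_const (Real.cosh (Real.sqrt 3 * x))).div_const
      ((Real.sinh (Real.sqrt 3 * x)) ^ 2)
  simp only [id_eq, mul_one] at h
  exact h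

/- ∂ᵧ of the three components of ry' -/
private lemma hdyy0 {x : ℝ} (hx : x ≠ 0) (y : ℝ) :
    HasDerivAt (fun t => 1 / Real.sqrt 3 * Real.exp t *
        ((Real.sinh (Real.sqrt 3 * x)) ^ 2 + 3 * t + 3) / Real.sinh (Real.sqrt 3 * x))
      (1 / Real.sqrt 3 * Real.exp y * ((Real.sinh (Real.sqrt 3 * x)) ^ 2 + 3 * y + 6) /
        Real.sinh (Real.sqrt 3 * x)) y := by
  have hun := sinh_ne hx
  have h := ((((hasDerivAt_id y).exp).const_mul (1 / Real.sqrt 3)).mul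
      ((((hasDerivAt_id y).const_mul 3).const_add ((Real.sinh (Real.sqrt 3 * x)) ^ 2)).add_const
        3)).div_const (Real.sinh (Real.sqrt 3 * x))
  refine h.congr_deriv (Eq.symm ?_)
  simp only [Pi.pow_apply, Pi.div_apply, id_eq]
  field_simp
  ring
private lemma hdyy1 (x y : ℝ) :
    HasDerivAt (fun t => 2 / Real.sqrt 3 * Real.exp (-2 * t) * Real.cosh (Real.sqrt 3 * x) /
        Real.sinh (Real.sqrt 3 * x))
      (-4 / Real.sqrt 3 * Real.exp (-2 * y) * Real.cosh (Real.sqrt 3 * x) /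
        Real.sinh (Real.sqrt 3 * x)) y := by
  have h := (((((hasDerivAt_id y).const_mul (-2)).exp).const_mul (2 / Real.sqrt 3)).mul_const
      (Real.cosh (Real.sqrt 3 * x))).div_const (Real.sinh (Real.sqrt 3 * x))
  simp only [id_eq, mul_one] at h
  refine h.congr_deriv (Eq.symm ?_)
  ring

/-- Real hyperbolic cotangent. -/
noncomputable def coth (x : ℝ) : ℝ := Real.cosh x / Real.sinh x

/-- The isothermal parametrization of Hildebrand's case-1 affine sphere. -/
noncomputable def r' (x y : ℝ) : Fin 3 → ℝ :=
  ![ (1 / Real.sqrt 3) * (Real.exp y / Real.sinh (Real.sqrt 3 * x)) *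
       ((Real.sinh (Real.sqrt 3 * x)) ^ 2 + 3 * y),
     -(1 / Real.sqrt 3) * Real.exp (-2 * y) * coth (Real.sqrt 3 * x),
     -(1 / Real.sqrt 3) * Real.exp y / Real.sinh (Real.sqrt 3 * x) ]

/-- `∂ₓ r'`. -/
noncomputable def rx' (x y : ℝ) : Fin 3 → ℝ := fun i => deriv (fun s => r' s y i) x
/-- `∂ᵧ r'`. -/
noncomputable def ry' (x y : ℝ) : Fin 3 → ℝ := fun i => deriv (fun s => r' x s i) y
/-- `∂ₓₓ r'`. -/
noncomputable def rxx' (x y : ℝ) : Fin 3 → ℝ := fun i => deriv (fun s => rx' s y i) x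
/-- `∂ₓᵧ r'`. -/
noncomputable def rxy' (x y : ℝ) : Fin 3 → ℝ := fun i => deriv (fun s => rx' x s i) y
/-- `∂ᵧᵧ r'`. -/
noncomputable def ryy' (x y : ℝ) : Fin 3 → ℝ := fun i => deriv (fun s => ry' x s i) y

private lemma rx'_eq {x : ℝ} (hx : x ≠ 0) (y : ℝ) :
    rx' x y = ![ Real.exp y * Real.cosh (Real.sqrt 3 * x) *
        (1 - 3 * y / (Real.sinh (Real.sqrt 3 * x)) ^ 2),
      Real.exp (-2 * y) / (Real.sinh (Real.sqrt 3 * x)) ^ 2,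
      Real.exp y * Real.cosh (Real.sqrt 3 * x) / (Real.sinh (Real.sqrt 3 * x)) ^ 2 ] := by
  funext i
  fin_cases i
  · show deriv (fun s => r' s y 0) x = _
    have e : (fun s => r' s y 0) = fun s => 1 / Real.sqrt 3 *
        (Real.exp y / Real.sinh (Real.sqrt 3 * s)) *
        ((Real.sinh (Real.sqrt 3 * s)) ^ 2 + 3 * y) := by
      funext s; simp [r']
    rw [e, (hdx0 hx y).deriv]
    simp
  · show deriv (fun s => r' s y 1) x = _
    have e : (fun s => r' s y 1) = fun s => -(1 / Real.sqrt 3) * Real.exp (-2 * y) *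
        (Real.cosh (Real.sqrt 3 * s) / Real.sinh (Real.sqrt 3 * s)) := by
      funext s; simp [r', coth]
    rw [e, (hdx1 hx y).deriv]
    simp
  · show deriv (fun s => r' s y 2) x = _
    have e : (fun s => r' s y 2) = fun s => -(1 / Real.sqrt 3) * Real.exp y /
        Real.sinh (Real.sqrt 3 * s) := by
      funext s; simp [r']
    rw [e, (hdx2 hx y).deriv]
    simp

private lemma ry'_eq {x : ℝ} (hx : x ≠ 0) (y : ℝ) :
    ry' x y = ![ 1 / Real.sqrt 3 * Real.exp y *
        ((Real.sinh (Real.sqrt 3 * x)) ^ 2 + 3 * y + 3) / Real.sinh (Real.sqrt 3 * x),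
      2 / Real.sqrt 3 * Real.exp (-2 * y) * Real.cosh (Real.sqrt 3 * x) /
        Real.sinh (Real.sqrt 3 * x),
      -(1 / Real.sqrt 3) * Real.exp y / Real.sinh (Real.sqrt 3 * x) ] := by
  funext i
  fin_cases i
  · show deriv (fun t => r' x t 0) y = _
    have e : (fun t => r' x t 0) = fun t => 1 / Real.sqrt 3 *
        (Real.exp t / Real.sinh (Real.sqrt 3 * x)) *
        ((Real.sinh (Real.sqrt 3 * x)) ^ 2 + 3 * t) := by
      funext t; simp [r']
    rw [e, (hdy0 hx y).deriv]
    simp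
  · show deriv (fun t => r' x t 1) y = _
    have e : (fun t => r' x t 1) = fun t => -(1 / Real.sqrt 3) * Real.exp (-2 * t) *
        (Real.cosh (Real.sqrt 3 * x) / Real.sinh (Real.sqrt 3 * x)) := by
      funext t; simp [r', coth]
    rw [e, (hdy1 x y).deriv]
    simp
  · show deriv (fun t => r' x t 2) y = _
    have e : (fun t => r' x t 2) = fun t => -(1 / Real.sqrt 3) * Real.exp t /
        Real.sinh (Real.sqrt 3 * x) := by
      funext t; simp [r']
    rw [e, (hdy2 x y).deriv]
    simp

private lemma rxy'_eq {x : ℝ} (hx : x ≠ 0) (y : ℝ) :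
    rxy' x y = ![ Real.exp y * Real.cosh (Real.sqrt 3 * x) *
        (1 - (3 * y + 3) / (Real.sinh (Real.sqrt 3 * x)) ^ 2),
      -2 * Real.exp (-2 * y) / (Real.sinh (Real.sqrt 3 * x)) ^ 2,
      Real.exp y * Real.cosh (Real.sqrt 3 * x) / (Real.sinh (Real.sqrt 3 * x)) ^ 2 ] := by
  funext i
  fin_cases i
  · show deriv (fun t => rx' x t 0) y = _
    have e : (fun t => rx' x t 0) = fun t => Real.exp t * Real.cosh (Real.sqrt 3 * x) *
        (1 - 3 * t / (Real.sinh (Real.sqrt 3 * x)) ^ 2) := by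
      funext t; rw [rx'_eq hx t]; simp
    rw [e, (hdxy0 x y).deriv]
    simp
  · show deriv (fun t => rx' x t 1) y = _
    have e : (fun t => rx' x t 1) = fun t => Real.exp (-2 * t) /
        (Real.sinh (Real.sqrt 3 * x)) ^ 2 := by
      funext t; rw [rx'_eq hx t]; simp
    rw [e, (hdxy1 x y).deriv]
    simp
  · show deriv (fun t => rx' x t 2) y = _
    have e : (fun t => rx' x t 2) = fun t => Real.exp t * Real.cosh (Real.sqrt 3 * x) /
        (Real.sinh (Real.sqrt 3 * x)) ^ 2 := by
      funext t; rw [rx'_eq hx t]; simp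
    rw [e, (hdxy2 x y).deriv]
    simp

private lemma ryy'_eq {x : ℝ} (hx : x ≠ 0) (y : ℝ) :
    ryy' x y = ![ 1 / Real.sqrt 3 * Real.exp y *
        ((Real.sinh (Real.sqrt 3 * x)) ^ 2 + 3 * y + 6) / Real.sinh (Real.sqrt 3 * x),
      -4 / Real.sqrt 3 * Real.exp (-2 * y) * Real.cosh (Real.sqrt 3 * x) /
        Real.sinh (Real.sqrt 3 * x),
      -(1 / Real.sqrt 3) * Real.exp y / Real.sinh (Real.sqrt 3 * x) ] := by
  funext i
  fin_cases i
  · show deriv (fun t => ry' x t 0) y = _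
    have e : (fun t => ry' x t 0) = fun t => 1 / Real.sqrt 3 * Real.exp t *
        ((Real.sinh (Real.sqrt 3 * x)) ^ 2 + 3 * t + 3) / Real.sinh (Real.sqrt 3 * x) := by
      funext t; rw [ry'_eq hx t]; simp
    rw [e, (hdyy0 hx y).deriv]
    simp
  · show deriv (fun t => ry' x t 1) y = _
    have e : (fun t => ry' x t 1) = fun t => 2 / Real.sqrt 3 * Real.exp (-2 * t) *
        Real.cosh (Real.sqrt 3 * x) / Real.sinh (Real.sqrt 3 * x) := by
      funext t; rw [ry'_eq hx t]; simp
    rw [e, (hdyy1 x y).deriv]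
    simp
  · show deriv (fun t => ry' x t 2) y = _
    have e : (fun t => ry' x t 2) = fun t => -(1 / Real.sqrt 3) * Real.exp t /
        Real.sinh (Real.sqrt 3 * x) := by
      funext t; rw [ry'_eq hx t]; simp
    rw [e, (hdy2 x y).deriv]
    simp

private lemma rxx'_eq {x : ℝ} (hx : x ≠ 0) (y : ℝ) :
    rxx' x y = ![ Real.sqrt 3 * Real.exp y * (Real.sinh (Real.sqrt 3 * x) -
        3 * y / Real.sinh (Real.sqrt 3 * x) +
        6 * y * (Real.cosh (Real.sqrt 3 * x)) ^ 2 / (Real.sinh (Real.sqrt 3 * x)) ^ 3),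
      -2 * Real.sqrt 3 * Real.exp (-2 * y) * Real.cosh (Real.sqrt 3 * x) /
        (Real.sinh (Real.sqrt 3 * x)) ^ 3,
      Real.sqrt 3 * Real.exp y * ((Real.sinh (Real.sqrt 3 * x)) ^ 2 -
        2 * (Real.cosh (Real.sqrt 3 * x)) ^ 2) / (Real.sinh (Real.sqrt 3 * x)) ^ 3 ] := by
  have hev : ∀ᶠ s in nhds x, s ≠ 0 := eventually_ne_nhds hx
  funext i
  fin_cases i
  · show deriv (fun s => rx' s y 0) x = _
    have e : (fun s => rx' s y 0) =ᶠ[nhds x] fun s => Real.exp y *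
        Real.cosh (Real.sqrt 3 * s) * (1 - 3 * y / (Real.sinh (Real.sqrt 3 * s)) ^ 2) := by
      filter_upwards [hev] with s hs
      rw [rx'_eq hs y]; simp
    rw [e.deriv_eq, (hdxx0 hx y).deriv]
    simp
  · show deriv (fun s => rx' s y 1) x = _
    have e : (fun s => rx' s y 1) =ᶠ[nhds x] fun s => Real.exp (-2 * y) /
        (Real.sinh (Real.sqrt 3 * s)) ^ 2 := by
      filter_upwards [hev] with s hs
      rw [rx'_eq hs y]; simp
    rw [e.deriv_eq, (hdxx1 hx y).deriv]
    simp
  · show deriv (fun s => rx' s y 2) x = _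
    have e : (fun s => rx' s y 2) =ᶠ[nhds x] fun s => Real.exp y *
        Real.cosh (Real.sqrt 3 * s) / (Real.sinh (Real.sqrt 3 * s)) ^ 2 := by
      filter_upwards [hev] with s hs
      rw [rx'_eq hs y]; simp
    rw [e.deriv_eq, (hdxx2 hx y).deriv]
    simp

set_option maxHeartbeats 1000000 in
/-- `(x,y)` are isothermal coordinates for the affine metric of `r'`, which equals
`(3 csch²(√3 x) + 2)(dx² + dy²)`. -/
theorem isothermal_coordinates_case1 :
    ∀ x : ℝ, 0 < x → ∀ y : ℝ,
      Matrix.det (Matrix.of ![rx' x y, ry' x y, rxy' x y]) = 0 ∧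
      Matrix.det (Matrix.of ![rx' x y, ry' x y, rxx' x y]) =
        Matrix.det (Matrix.of ![rx' x y, ry' x y, ryy' x y]) ∧
      |Matrix.det (Matrix.of ![rx' x y, ry' x y, rxx' x y])| =
        (3 / (Real.sinh (Real.sqrt 3 * x)) ^ 2 + 2) ^ 2 := by
  intro x hx y
  have hx0 : x ≠ 0 := ne_of_gt hx
  have hun := sinh_ne hx0
  have hE : Real.exp y ≠ 0 := Real.exp_ne_zero y
  have hc : (Real.cosh (Real.sqrt 3 * x)) ^ 2 - (Real.sinh (Real.sqrt 3 * x)) ^ 2 = 1 :=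
    Real.cosh_sq_sub_sinh_sq _
  have hs3 : Real.sqrt 3 ^ 2 = 3 := Real.sq_sqrt (by norm_num)
  have hF : Real.exp (-2 * y) = (Real.exp y ^ 2)⁻¹ := by
    rw [sq, ← Real.exp_add, ← Real.exp_neg]; congr 1; ring
  refine ⟨?_, ?_, ?_⟩
  · rw [rx'_eq hx0 y, ry'_eq hx0 y, rxy'_eq hx0 y]
    simp only [Matrix.det_fin_three, Matrix.of_apply, Matrix.cons_val', Matrix.cons_val_zero,
      Matrix.cons_val_one, Matrix.head_cons, Matrix.empty_val', Matrix.cons_val_fin_one,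
      Matrix.head_fin_const, Matrix.cons_val_two, Matrix.tail_cons, hF]
    field_simp
    linear_combination (6 * Real.cosh (Real.sqrt 3 * x)) * hc
  · rw [rx'_eq hx0 y, ry'_eq hx0 y, rxx'_eq hx0 y, ryy'_eq hx0 y]
    simp only [Matrix.det_fin_three, Matrix.of_apply, Matrix.cons_val', Matrix.cons_val_zero,
      Matrix.cons_val_one, Matrix.head_cons, Matrix.empty_val', Matrix.cons_val_fin_one,
      Matrix.head_fin_const, Matrix.cons_val_two, Matrix.tail_cons, hF]
    field_simp
    linear_combination (Real.sinh (Real.sqrt 3 * x) ^ 2 *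
        (6 - 12 * Real.cosh (Real.sqrt 3 * x) ^ 2)) * hc -
      (Real.sinh (Real.sqrt 3 * x) ^ 2 *
        (4 * Real.cosh (Real.sqrt 3 * x) ^ 4 + 2 * Real.cosh (Real.sqrt 3 * x) ^ 2 +
         2 * Real.sinh (Real.sqrt 3 * x) ^ 2 + 3)) * hs3
  · rw [rx'_eq hx0 y, ry'_eq hx0 y, rxx'_eq hx0 y, abs_eq (by positivity)]
    right
    simp only [Matrix.det_fin_three, Matrix.of_apply, Matrix.cons_val', Matrix.cons_val_zero,
      Matrix.cons_val_one, Matrix.head_cons, Matrix.empty_val', Matrix.cons_val_fin_one,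
      Matrix.head_fin_const, Matrix.cons_val_two, Matrix.tail_cons, hF]
    field_simp
    linear_combination (Real.sinh (Real.sqrt 3 * x) ^ 2 *
      (-4 * Real.cosh (Real.sqrt 3 * x) ^ 2 - 4 * Real.sinh (Real.sqrt 3 * x) ^ 2 - 6)) * hc
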